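/- Let d ≥ 1, M ∈ ℕ, δ ∈ (0, M], and let K be a stochastic matrix on ℤ^d with K(x,y) = 0 whenever ‖x − y‖₁ ≥ M and ‖Σ_y K(x,y) y‖₁ ≥ ‖x‖₁ + δ for all x. Let (S_j)_{j≥0} be a Markov chain with transition matrix K and S₀ = x. Then for any a > 1 with ℓ_a(δ) < 1 (where ℓ_a is the affine function through (−M, a^M) and (M, a^{−M})), one has E[a^{−‖S_j‖₁}] ≤ (ℓ_a(δ))^j · a^{−‖x‖₁} for all j ≥ 0. -/

import Mathlib

open MeasureTheory
open scoped ENNReal NNReal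

/-- The `ℓ¹`-norm of a point of `ℤ^d`, as a real number. -/
noncomputable def l1norm {d : ℕ} (x : Fin d → ℤ) : ℝ := ∑ i, |(x i : ℝ)|

/-- The affine function through `(-M, a^M)` and `(M, a^{-M})`. -/
noncomputable def ella (a : ℝ) (M : ℕ) (s : ℝ) : ℝ :=
  (a ^ M + (a ^ M)⁻¹) / 2 + s * ((a ^ M)⁻¹ - a ^ M) / (2 * M)

/-- The σ-field generated by the first `j + 1` positions of the chain `S`. -/
def chainFiltration {Ω : Type*} [MeasurableSpace Ω] {d : ℕ}
    (S : ℕ → Ω → (Fin d → ℤ)) (j : ℕ) : MeasurableSpace Ω :=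
  ⨆ k ∈ Finset.range (j + 1), MeasurableSpace.comap (S k) inferInstance

section Helpers
variable {d M : ℕ} {δ : ℝ} {K : (Fin d → ℤ) → (Fin d → ℤ) → ℝ} {a : ℝ}

lemma chord {a : ℝ} (ha : 1 < a) {M : ℕ} (hM : 0 < M) {s : ℝ} (hs : |s| ≤ M) :
    a ^ (-s) ≤ ella a M s := by
  have ha0 : (0:ℝ) < a := lt_trans one_pos ha
  have hM0 : (0:ℝ) < (M:ℝ) := by exact_mod_cast hM
  have hrw : ∀ t : ℝ, a ^ (-t) = Real.exp ((-Real.log a) * t) := by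
    intro t
    rw [Real.rpow_def_of_pos ha0]
    ring_nf
  have hconv : ConvexOn ℝ Set.univ (fun t : ℝ => Real.exp ((-Real.log a) * t)) := by
    have := convexOn_exp.comp_affineMap
      (((-Real.log a) • (LinearMap.id : ℝ →ₗ[ℝ] ℝ)).toAffineMap)
    simpa [Function.comp_def, smul_eq_mul] using this
  obtain ⟨hs1, hs2⟩ := abs_le.mp hs
  have ht : 0 ≤ ((M:ℝ) - s) / (2*M) := div_nonneg (by linarith) (by linarith)
  have hu : 0 ≤ ((M:ℝ) + s) / (2*M) := div_nonneg (by linarith) (by linarith)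
  have htu : ((M:ℝ) - s) / (2*M) + ((M:ℝ) + s) / (2*M) = 1 := by field_simp; ring
  have h2 := hconv.2 (Set.mem_univ (-(M:ℝ))) (Set.mem_univ (M:ℝ)) ht hu htu
  simp only [smul_eq_mul] at h2
  have hpt : ((M:ℝ) - s) / (2*M) * (-(M:ℝ)) + ((M:ℝ) + s) / (2*M) * (M:ℝ) = s := by
    field_simp; ring
  rw [hpt] at h2
  have hAM : Real.exp ((-Real.log a) * (-(M:ℝ))) = a ^ M := by
    rw [show -Real.log a * (-(M:ℝ)) = (M:ℝ) * Real.log a by ring]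
    rw [show ((M:ℝ) * Real.log a) = Real.log (a ^ M) by rw [Real.log_pow],
      Real.exp_log (pow_pos ha0 M)]
  have hBM : Real.exp ((-Real.log a) * (M:ℝ)) = (a ^ M)⁻¹ := by
    rw [show -Real.log a * (M:ℝ) = -((M:ℝ) * Real.log a) by ring]
    rw [show ((M:ℝ) * Real.log a) = Real.log (a ^ M) by rw [Real.log_pow],
      Real.exp_neg, Real.exp_log (pow_pos ha0 M)]
  rw [hrw s]
  refine h2.trans (le_of_eq ?_)
  rw [hAM, hBM]
  have hA0 : a ^ M ≠ 0 := (pow_pos ha0 M).ne'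
  unfold ella
  field_simp
  ring

lemma ella_anti {a : ℝ} (ha : 1 < a) {M : ℕ} (hM : 0 < M) {s t : ℝ} (hst : s ≤ t) :
    ella a M t ≤ ella a M s := by
  have ha0 : (0:ℝ) < a := lt_trans one_pos ha
  have hA : 1 < a ^ M := one_lt_pow₀ ha hM.ne'
  have hM0 : (0:ℝ) < (M:ℝ) := by exact_mod_cast hM
  have hC : (a ^ M)⁻¹ - a ^ M ≤ 0 := by
    have : (a ^ M)⁻¹ ≤ 1 := inv_le_one_of_one_le₀ hA.le
    linarith
  unfold ella
  have h1 : t * ((a ^ M)⁻¹ - a ^ M) ≤ s * ((a ^ M)⁻¹ - a ^ M) :=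
    mul_le_mul_of_nonpos_right hst hC
  have h2M : (0:ℝ) < 2 * M := by linarith
  have := (div_le_div_iff_of_pos_right h2M).mpr h1
  linarith

lemma ella_pos {a : ℝ} (ha : 1 < a) {M : ℕ} (hM : 0 < M) {δ : ℝ} (hδ0 : 0 < δ)
    (hδM : δ ≤ M) : 0 < ella a M δ := by
  have : |δ| ≤ (M : ℝ) := by rw [abs_of_pos hδ0]; exact hδM
  exact lt_of_lt_of_le (Real.rpow_pos_of_pos (lt_trans one_pos ha) _) (chord ha hM this)

/-- The box of points within `ℓ¹`-distance `≤ M` of `z`; outside it `K z · = 0`. -/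
noncomputable def box (M : ℕ) (z : Fin d → ℤ) : Finset (Fin d → ℤ) :=
  Fintype.piFinset (fun i => Finset.Icc (z i - M) (z i + M))

lemma K_zero_outside (hKrange : ∀ x y, (M : ℝ) ≤ l1norm (fun i => x i - y i) → K x y = 0)
    (z : Fin d → ℤ) : ∀ y ∉ box M z, K z y = 0 := by
  intro y hy
  apply hKrange
  simp only [box, Fintype.mem_piFinset, Finset.mem_Icc, not_forall] at hy
  obtain ⟨i, hi⟩ := hy
  have hint : (M : ℤ) + 1 ≤ z i - y i ∨ (M : ℤ) + 1 ≤ y i - z i := by omega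
  have habs : (M : ℝ) ≤ |(z i : ℝ) - (y i : ℝ)| := by
    rcases hint with h | h
    · have : (M : ℝ) + 1 ≤ (z i : ℝ) - (y i : ℝ) := by exact_mod_cast h
      exact le_trans (by linarith) (le_abs_self _)
    · have h2 : (M : ℝ) + 1 ≤ (y i : ℝ) - (z i : ℝ) := by exact_mod_cast h
      rw [abs_sub_comm]
      exact le_trans (by linarith) (le_abs_self _)
  refine habs.trans ?_
  have heq : |(z i : ℝ) - (y i : ℝ)| = |(((fun j => z j - y j) i : ℤ) : ℝ)| := by
    push_cast; ring_nf
  rw [heq]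
  exact Finset.single_le_sum (f := fun j => |(((fun j => z j - y j) j : ℤ) : ℝ)|)
    (fun j _ => abs_nonneg _) (Finset.mem_univ i)

lemma sum_K_one (hKstoch : ∀ x, HasSum (fun y => K x y) 1)
    (hKrange : ∀ x y, (M : ℝ) ≤ l1norm (fun i => x i - y i) → K x y = 0)
    (z : Fin d → ℤ) : ∑ y ∈ box M z, K z y = 1 := by
  have h := (hKstoch z).tsum_eq
  rwa [tsum_eq_sum (K_zero_outside hKrange z)] at h

lemma l1_triangle (z y : Fin d → ℤ) :
    |l1norm y - l1norm z| ≤ l1norm (fun i => z i - y i) := by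
  rw [abs_sub_le_iff]
  constructor <;> [skip; skip] <;>
  · unfold l1norm
    rw [← Finset.sum_sub_distrib]
    apply Finset.sum_le_sum
    intro i _
    push_cast
    first
    | calc |(y i : ℝ)| - |(z i : ℝ)| ≤ |(y i : ℝ) - (z i : ℝ)| := abs_sub_abs_le_abs_sub _ _
        _ = |(z i : ℝ) - (y i : ℝ)| := abs_sub_comm _ _
    | calc |(z i : ℝ)| - |(y i : ℝ)| ≤ |(z i : ℝ) - (y i : ℝ)| := abs_sub_abs_le_abs_sub _ _

lemma step_bound (hM : 0 < M) (hδ0 : 0 < δ) (hδM : δ ≤ M)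
    (hKnn : ∀ x y, 0 ≤ K x y)
    (hKstoch : ∀ x, HasSum (fun y => K x y) 1)
    (hKrange : ∀ x y, (M : ℝ) ≤ l1norm (fun i => x i - y i) → K x y = 0)
    (hdrift : ∀ x : Fin d → ℤ,
      l1norm x + δ ≤ ∑ i : Fin d, |∑' y : Fin d → ℤ, K x y * (y i : ℝ)|)
    (ha : 1 < a) (z : Fin d → ℤ) :
    ∑' y, K z y * a ^ (-(l1norm y)) ≤ ella a M δ * a ^ (-(l1norm z)) := by
  have ha0 : (0:ℝ) < a := lt_trans one_pos ha
  have hA : (0:ℝ) ≤ a ^ (-(l1norm z)) := (Real.rpow_pos_of_pos ha0 _).le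
  set F := box M z with hF
  have hz0 : ∀ y ∉ F, K z y * a ^ (-(l1norm y)) = 0 := fun y hy => by
    rw [K_zero_outside hKrange z y hy, zero_mul]
  rw [tsum_eq_sum hz0]
  have hterm : ∀ y ∈ F, K z y * a ^ (-(l1norm y)) ≤
      K z y * (a ^ (-(l1norm z)) * ella a M (l1norm y - l1norm z)) := by
    intro y _
    rcases eq_or_ne (K z y) 0 with h0 | h0
    · simp [h0]
    · have hlt : l1norm (fun i => z i - y i) < M := by
        by_contra hge
        exact h0 (hKrange z y (le_of_not_gt hge))
      have habs : |l1norm y - l1norm z| ≤ M := (l1_triangle z y).trans hlt.le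
      have hsplit : a ^ (-(l1norm y)) =
          a ^ (-(l1norm z)) * a ^ (-(l1norm y - l1norm z)) := by
        rw [← Real.rpow_add ha0]; ring_nf
      rw [hsplit]
      have := chord ha hM habs
      exact mul_le_mul_of_nonneg_left
        (mul_le_mul_of_nonneg_left this (Real.rpow_nonneg ha0.le _)) (hKnn z y)
  refine (Finset.sum_le_sum hterm).trans ?_
  set c0 : ℝ := (a ^ M + (a ^ M)⁻¹) / 2
  set c1 : ℝ := ((a ^ M)⁻¹ - a ^ M) / (2 * M)
  have hella : ∀ s : ℝ, ella a M s = c0 + s * c1 := by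
    intro s; unfold ella; rw [mul_div_assoc]
  have hsum1 : ∑ y ∈ F, K z y = 1 := sum_K_one hKstoch hKrange z
  have hdrift' : l1norm z + δ ≤ ∑ y ∈ F, K z y * (l1norm y) := by
    have h1 : ∀ i : Fin d, |∑' y : Fin d → ℤ, K z y * (y i : ℝ)| ≤
        ∑ y ∈ F, K z y * |(y i : ℝ)| := by
      intro i
      rw [tsum_eq_sum (s := F) (fun y hy => by rw [K_zero_outside hKrange z y hy, zero_mul])]
      refine (Finset.abs_sum_le_sum_abs _ _).trans (le_of_eq ?_)
      refine Finset.sum_congr rfl fun y _ => ?_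
      rw [abs_mul, abs_of_nonneg (hKnn z y)]
    calc l1norm z + δ ≤ ∑ i : Fin d, |∑' y : Fin d → ℤ, K z y * (y i : ℝ)| := hdrift z
      _ ≤ ∑ i : Fin d, ∑ y ∈ F, K z y * |(y i : ℝ)| := Finset.sum_le_sum fun i _ => h1 i
      _ = ∑ y ∈ F, K z y * (l1norm y) := by
          rw [Finset.sum_comm]
          exact Finset.sum_congr rfl fun y _ => by rw [l1norm, Finset.mul_sum]
  have hmean : δ ≤ ∑ y ∈ F, K z y * (l1norm y - l1norm z) := by
    have e1 : ∑ y ∈ F, K z y * (l1norm y - l1norm z)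
        = (∑ y ∈ F, K z y * l1norm y) - (∑ y ∈ F, K z y) * l1norm z := by
      simp only [mul_sub]
      rw [Finset.sum_sub_distrib, ← Finset.sum_mul]
    rw [e1, hsum1, one_mul]; linarith
  have e2 : ∑ y ∈ F, K z y * ella a M (l1norm y - l1norm z)
      = c0 + (∑ y ∈ F, K z y * (l1norm y - l1norm z)) * c1 := by
    have hx : ∀ y, K z y * (c0 + (l1norm y - l1norm z) * c1)
        = K z y * c0 + (K z y * (l1norm y - l1norm z)) * c1 := fun y => by ring
    simp only [hella, hx]
    rw [Finset.sum_add_distrib, ← Finset.sum_mul, ← Finset.sum_mul, hsum1, one_mul]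
  calc ∑ y ∈ F, K z y * (a ^ (-(l1norm z)) * ella a M (l1norm y - l1norm z))
      = a ^ (-(l1norm z)) * ∑ y ∈ F, K z y * ella a M (l1norm y - l1norm z) := by
        rw [Finset.mul_sum]; exact Finset.sum_congr rfl fun y _ => by ring
    _ = a ^ (-(l1norm z)) * ella a M (∑ y ∈ F, K z y * (l1norm y - l1norm z)) := by
        rw [e2, hella]
    _ ≤ a ^ (-(l1norm z)) * ella a M δ := mul_le_mul_of_nonneg_left (ella_anti ha hM hmean) hA
    _ = ella a M δ * a ^ (-(l1norm z)) := mul_comm _ _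

end Helpers

/-- Let `K` be a stochastic matrix on `ℤ^d` with jumps of `ℓ¹`-size `< M` and
drift `‖∑_y K(x,y) y‖₁ ≥ ‖x‖₁ + δ` with `δ ∈ (0, M]`. If `(S_j)` is a Markov chain with
transition matrix `K` started at `x`, then for any `a > 1` with `ℓ_a(δ) < 1` one has
`E[a^{-‖S_j‖₁}] ≤ ℓ_a(δ)^j a^{-‖x‖₁}` for all `j`. -/
theorem stmt5 {Ω : Type*} [MeasurableSpace Ω] (P : Measure Ω) [IsProbabilityMeasure P]
    (d M : ℕ) (hd : 1 ≤ d) (δ : ℝ) (hδ0 : 0 < δ) (hδM : δ ≤ M)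
    (K : (Fin d → ℤ) → (Fin d → ℤ) → ℝ)
    (hKnn : ∀ x y, 0 ≤ K x y)
    (hKstoch : ∀ x, HasSum (fun y => K x y) 1)
    (hKrange : ∀ x y, (M : ℝ) ≤ l1norm (fun i => x i - y i) → K x y = 0)
    (hdrift : ∀ x : Fin d → ℤ,
      l1norm x + δ ≤ ∑ i : Fin d, |∑' y : Fin d → ℤ, K x y * (y i : ℝ)|)
    (S : ℕ → Ω → (Fin d → ℤ)) (hS : ∀ j, Measurable (S j))
    (x : Fin d → ℤ) (hS0 : ∀ ω, S 0 ω = x)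
    (hMarkov : ∀ (j : ℕ) (y : Fin d → ℤ),
      (P[Set.indicator {ω | S (j + 1) ω = y} (fun _ => (1 : ℝ)) | chainFiltration S j])
        =ᵐ[P] fun ω => K (S j ω) y)
    (a : ℝ) (ha : 1 < a) (hla : ella a M δ < 1) (j : ℕ) :
    ∫ ω, a ^ (-(l1norm (S j ω))) ∂P ≤ (ella a M δ) ^ j * a ^ (-(l1norm x)) := by
  have ha0 : (0:ℝ) < a := lt_trans one_pos ha
  have hMpos : 0 < M := by
    have : (0:ℝ) < (M:ℝ) := lt_of_lt_of_le hδ0 hδM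
    exact_mod_cast this
  have hEpos : 0 < ella a M δ := ella_pos ha hMpos hδ0 hδM
  have hone : ∀ z : Fin d → ℤ, a ^ (-(l1norm z)) ≤ 1 := by
    intro z
    apply Real.rpow_le_one_of_one_le_of_nonpos ha.le
    simp only [neg_nonpos, l1norm]
    exact Finset.sum_nonneg fun i _ => abs_nonneg _
  induction j with
  | zero =>
    simp only [hS0, pow_zero, one_mul]
    rw [integral_const]
    simp
  | succ j ih =>
    have hm : chainFiltration S j ≤ ‹MeasurableSpace Ω› :=
      iSup₂_le fun k _ => (hS k).comap_le
    have hAm : ∀ y : Fin d → ℤ, MeasurableSet {ω | S (j+1) ω = y} := fun y =>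
      hS (j+1) (measurableSet_singleton y)
    have hKm : ∀ y, Measurable fun ω => K (S j ω) y := fun y =>
      (measurable_of_countable (fun z => K z y)).comp (hS j)
    have hint : ∀ y, ∫ ω, K (S j ω) y ∂P = (P {ω | S (j+1) ω = y}).toReal := by
      intro y
      have h1 := integral_congr_ae (hMarkov j y)
      have h2 := integral_condExp (μ := P)
        (f := Set.indicator {ω | S (j + 1) ω = y} (fun _ => (1:ℝ))) hm
      rw [← h1, h2, integral_indicator_const (1:ℝ) (hAm y), smul_eq_mul, mul_one, measureReal_def]
    have hdisj : Pairwise (Function.onFun Disjoint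
        (fun y : Fin d → ℤ => {ω | S (j+1) ω = y})) := by
      intro y y' hne
      simp only [Function.onFun, Set.disjoint_left, Set.mem_setOf_eq]
      intro ω h1 h2
      exact hne (h1.symm.trans h2)
    have hmeas_sum : ∑' y : Fin d → ℤ, P {ω | S (j+1) ω = y} ≤ 1 := by
      have := tsum_measure_le_measure_univ (μ := P) (fun y => (hAm y).nullMeasurableSet) (hdisj.mono fun _ _ h => Disjoint.aedisjoint h)
      simpa using this
    have hnorm_le_one : ∀ y : Fin d → ℤ, (‖a ^ (-(l1norm y))‖₊ : ℝ≥0∞) ≤ 1 := by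
      intro y
      rw [ENNReal.coe_le_one_iff]
      have h1 : ‖a ^ (-(l1norm y))‖ ≤ 1 := by
        rw [Real.norm_eq_abs, abs_of_pos (Real.rpow_pos_of_pos ha0 _)]
        exact hone y
      exact_mod_cast h1
    -- pointwise decomposition over the countable state space
    have hptw : ∀ ω, a ^ (-(l1norm (S (j+1) ω))) =
        ∑' y : Fin d → ℤ,
          Set.indicator {ω' | S (j+1) ω' = y} (fun _ => a ^ (-(l1norm y))) ω := by
      intro ω
      have h0 : ∀ y : Fin d → ℤ, y ≠ S (j+1) ω →
          Set.indicator {ω' | S (j+1) ω' = y} (fun _ => a ^ (-(l1norm y))) ω = 0 := by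
        intro y hy
        exact Set.indicator_of_notMem
          (show ω ∉ {ω' | S (j+1) ω' = y} from fun h => hy (Eq.symm h)) _
      rw [tsum_eq_single _ h0]
      exact (Set.indicator_of_mem
        (show ω ∈ {ω' | S (j+1) ω' = S (j+1) ω} from rfl)
        (fun _ => a ^ (-(l1norm (S (j+1) ω))))).symm
    have haesm1 : ∀ y : Fin d → ℤ, AEStronglyMeasurable
        (Set.indicator {ω' | S (j+1) ω' = y} (fun _ => a ^ (-(l1norm y)))) P := fun y =>
      (measurable_const.indicator (hAm y)).aestronglyMeasurable
    have hb1 : ∑' y : Fin d → ℤ, ∫⁻ ω,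
        ‖Set.indicator {ω' | S (j+1) ω' = y} (fun _ => a ^ (-(l1norm y))) ω‖₊ ∂P ≠ ⊤ := by
      have hle : ∀ y : Fin d → ℤ, ∫⁻ ω,
          ‖Set.indicator {ω' | S (j+1) ω' = y} (fun _ => a ^ (-(l1norm y))) ω‖₊ ∂P
          ≤ P {ω' | S (j+1) ω' = y} := by
        intro y
        have hpt : ∀ ω, (‖Set.indicator {ω' | S (j+1) ω' = y}
            (fun _ => a ^ (-(l1norm y))) ω‖₊ : ℝ≥0∞)
            ≤ Set.indicator {ω' | S (j+1) ω' = y} (fun _ => (1:ℝ≥0∞)) ω := by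
          intro ω
          by_cases h : ω ∈ {ω' | S (j+1) ω' = y}
          · rw [Set.indicator_of_mem h, Set.indicator_of_mem h]
            exact hnorm_le_one y
          · rw [Set.indicator_of_notMem h, Set.indicator_of_notMem h]
            simp
        calc ∫⁻ ω, ‖Set.indicator {ω' | S (j+1) ω' = y}
              (fun _ => a ^ (-(l1norm y))) ω‖₊ ∂P
            ≤ ∫⁻ ω, Set.indicator {ω' | S (j+1) ω' = y} (fun _ => (1:ℝ≥0∞)) ω ∂P :=
              lintegral_mono hpt
          _ = P {ω' | S (j+1) ω' = y} := by
              rw [lintegral_indicator_const (hAm y), one_mul]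
      exact ne_top_of_le_ne_top (by simp) ((ENNReal.tsum_le_tsum hle).trans hmeas_sum)
    have E1 : ∫ ω, a ^ (-(l1norm (S (j+1) ω))) ∂P
        = ∑' y : Fin d → ℤ, a ^ (-(l1norm y)) * (P {ω' | S (j+1) ω' = y}).toReal := by
      rw [integral_congr_ae (ae_of_all P hptw), integral_tsum haesm1 hb1]
      exact tsum_congr fun y => by
        rw [integral_indicator_const _ (hAm y), smul_eq_mul, mul_comm, measureReal_def]
    have E2 : ∀ y : Fin d → ℤ, a ^ (-(l1norm y)) * (P {ω' | S (j+1) ω' = y}).toReal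
        = ∫ ω, K (S j ω) y * a ^ (-(l1norm y)) ∂P := by
      intro y
      rw [integral_mul_const, hint y, mul_comm]
    have htsumK : ∀ z : Fin d → ℤ, ∑' y : Fin d → ℤ, ENNReal.ofReal (K z y) = 1 := by
      intro z
      rw [tsum_eq_sum (s := box M z)
        (fun y hy => by rw [K_zero_outside hKrange z y hy, ENNReal.ofReal_zero]),
        ← ENNReal.ofReal_sum_of_nonneg (fun y _ => hKnn z y),
        sum_K_one hKstoch hKrange z, ENNReal.ofReal_one]
    have hnn_le : ∀ (z : Fin d → ℤ) (y : Fin d → ℤ),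
        (‖K z y * a ^ (-(l1norm y))‖₊ : ℝ≥0∞) ≤ ENNReal.ofReal (K z y) := by
      intro z y
      rw [← Real.enorm_eq_ofReal (hKnn z y), enorm_eq_nnnorm, nnnorm_mul, ENNReal.coe_mul]
      exact mul_le_of_le_one_right (by positivity) (hnorm_le_one y)
    have hb2 : ∑' y : Fin d → ℤ, ∫⁻ ω, ‖K (S j ω) y * a ^ (-(l1norm y))‖₊ ∂P ≠ ⊤ := by
      have h1 : ∀ y : Fin d → ℤ, ∫⁻ ω, ‖K (S j ω) y * a ^ (-(l1norm y))‖₊ ∂P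
          ≤ ∫⁻ ω, ENNReal.ofReal (K (S j ω) y) ∂P :=
        fun y => lintegral_mono fun ω => hnn_le _ y
      have h2 : ∑' y : Fin d → ℤ, ∫⁻ ω, ENNReal.ofReal (K (S j ω) y) ∂P
          = ∫⁻ ω, ∑' y : Fin d → ℤ, ENNReal.ofReal (K (S j ω) y) ∂P :=
        (lintegral_tsum fun y =>
          (ENNReal.measurable_ofReal.comp (hKm y)).aemeasurable).symm
      have h3 : ∫⁻ ω, ∑' y : Fin d → ℤ, ENNReal.ofReal (K (S j ω) y) ∂P = 1 := by
        simp only [htsumK]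
        simp
      refine ne_top_of_le_ne_top (by simp : (1:ℝ≥0∞) ≠ ⊤) ?_
      calc ∑' y : Fin d → ℤ, ∫⁻ ω, ‖K (S j ω) y * a ^ (-(l1norm y))‖₊ ∂P
          ≤ ∑' y : Fin d → ℤ, ∫⁻ ω, ENNReal.ofReal (K (S j ω) y) ∂P :=
            ENNReal.tsum_le_tsum h1
        _ = 1 := h2.trans h3
    have E3 : ∑' y : Fin d → ℤ, ∫ ω, K (S j ω) y * a ^ (-(l1norm y)) ∂P
        = ∫ ω, ∑' y : Fin d → ℤ, K (S j ω) y * a ^ (-(l1norm y)) ∂P :=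
      (integral_tsum (fun y => ((hKm y).mul_const _).aestronglyMeasurable) hb2).symm
    have hH : ∀ z : Fin d → ℤ, 0 ≤ ∑' y, K z y * a ^ (-(l1norm y)) := fun z =>
      tsum_nonneg fun y => mul_nonneg (hKnn z y) (Real.rpow_nonneg ha0.le _)
    have hHle : ∀ z, ∑' y, K z y * a ^ (-(l1norm y)) ≤ ella a M δ * a ^ (-(l1norm z)) :=
      step_bound hMpos hδ0 hδM hKnn hKstoch hKrange hdrift ha
    have hint1 : Integrable (fun ω => ∑' y, K (S j ω) y * a ^ (-(l1norm y))) P := by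
      refine ⟨((measurable_of_countable
          (fun z => ∑' y, K z y * a ^ (-(l1norm y)))).comp (hS j)).aestronglyMeasurable,
        HasFiniteIntegral.of_bounded (C := ella a M δ) (ae_of_all _ fun ω => ?_)⟩
      rw [Real.norm_eq_abs, abs_of_nonneg (hH _)]
      refine (hHle _).trans ?_
      nlinarith [hone (S j ω), (Real.rpow_pos_of_pos ha0 (-(l1norm (S j ω)))).le]
    have hint2 : Integrable (fun ω => a ^ (-(l1norm (S j ω)))) P := by
      refine ⟨((measurable_of_countable
          (fun z : Fin d → ℤ => a ^ (-(l1norm z)))).comp (hS j)).aestronglyMeasurable,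
        HasFiniteIntegral.of_bounded (C := 1) (ae_of_all _ fun ω => ?_)⟩
      rw [Real.norm_eq_abs, abs_of_pos (Real.rpow_pos_of_pos ha0 _)]
      exact hone _
    have E4 : ∫ ω, ∑' y, K (S j ω) y * a ^ (-(l1norm y)) ∂P
        ≤ ∫ ω, ella a M δ * a ^ (-(l1norm (S j ω))) ∂P :=
      integral_mono hint1 (hint2.const_mul _) fun ω => hHle (S j ω)
    calc ∫ ω, a ^ (-(l1norm (S (j+1) ω))) ∂P
        = ∑' y : Fin d → ℤ, a ^ (-(l1norm y)) * (P {ω' | S (j+1) ω' = y}).toReal := E1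
      _ = ∑' y : Fin d → ℤ, ∫ ω, K (S j ω) y * a ^ (-(l1norm y)) ∂P := tsum_congr E2
      _ = ∫ ω, ∑' y : Fin d → ℤ, K (S j ω) y * a ^ (-(l1norm y)) ∂P := E3
      _ ≤ ∫ ω, ella a M δ * a ^ (-(l1norm (S j ω))) ∂P := E4
      _ = ella a M δ * ∫ ω, a ^ (-(l1norm (S j ω))) ∂P := integral_const_mul _ _
      _ ≤ ella a M δ * ((ella a M δ) ^ j * a ^ (-(l1norm x))) :=
          mul_le_mul_of_nonneg_left ih hEpos.le
      _ = (ella a M δ) ^ (j+1) * a ^ (-(l1norm x)) := by rw [pow_succ]; ring
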